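/- Let V : ℤ → ℝ, let m < n be integers, and let E₀ ∈ ℝ satisfy |tr A[V](E₀,m,n)| < 2. Then on the open set of energies E with |tr A[V](E,m,n)| < 2, the function E ↦ Θ(A[V](E,m,n)) is differentiable at E₀ and (d/dE) Θ(A[V](E,m,n))|_{E=E₀} < 0. (Lemma 5.1.) -/

import Mathlib

open MeasureTheory Filter Real
noncomputable section

attribute [local instance] Matrix.normedAddCommGroup Matrix.normedSpace
attribute [local instance] Classical.propDecidable

/-- Operator norm of a 2×2 real matrix acting on the Euclidean plane. -/
def opNorm (A : Matrix (Fin 2) (Fin 2) ℝ) : ℝ := ‖Matrix.toEuclideanCLM (𝕜 := ℝ) A‖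

/-- The rotation matrix of angle `2πθ`. -/
def rot (θ : ℝ) : Matrix (Fin 2) (Fin 2) ℝ :=
  !![Real.cos (2 * π * θ), -Real.sin (2 * π * θ);
     Real.sin (2 * π * θ), Real.cos (2 * π * θ)]

/-- The Möbius action of a real 2×2 matrix on ℂ. -/
def moebius (A : Matrix (Fin 2) (Fin 2) ℝ) (z : ℂ) : ℂ :=
  ((A 0 0 : ℝ) * z + (A 0 1 : ℝ)) / ((A 1 0 : ℝ) * z + (A 1 1 : ℝ))

/-- The fixed point `u(A)` in the upper half-plane of an elliptic `A ∈ SL(2,ℝ)`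
(junk value `i` if there is none). -/
def fixedPt (A : Matrix (Fin 2) (Fin 2) ℝ) : ℂ :=
  if h : ∃ z : ℂ, 0 < z.im ∧ moebius A z = z then h.choose else Complex.I

/-- `θ ∈ (0,1/2) ∪ (1/2,1)` is a rotation number for `A` if `A` is conjugate in `SL(2,ℝ)`
to the rotation `R_θ`. -/
def IsRotationNumber (A : Matrix (Fin 2) (Fin 2) ℝ) (θ : ℝ) : Prop :=
  (θ ∈ Set.Ioo (0:ℝ) (1/2) ∪ Set.Ioo (1/2:ℝ) 1) ∧
    ∃ B : Matrix (Fin 2) (Fin 2) ℝ, B.det = 1 ∧ B * A * B⁻¹ = rot θ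

/-- `Θ(A)`: the rotation number of an elliptic `A ∈ SL(2,ℝ)` (junk value `0` if none). -/
def Theta (A : Matrix (Fin 2) (Fin 2) ℝ) : ℝ :=
  if h : ∃ θ : ℝ, IsRotationNumber A θ then h.choose else 0

/-- The hyperbolic distance on the upper half-plane. -/
def hypDist (z w : ℂ) : ℝ :=
  2 * Real.arsinh (‖z - w‖ / (2 * Real.sqrt (z.im * w.im)))

/-- The one-step matrix `[[E − V(n), −1],[1,0]]` of the discrete Schrödinger cocycle. -/
def schStep (V : ℤ → ℝ) (E : ℝ) (n : ℤ) : Matrix (Fin 2) (Fin 2) ℝ :=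
  !![E - V n, -1; 1, 0]

private def transferAux (V : ℤ → ℝ) (E : ℝ) (m : ℤ) : ℕ → Matrix (Fin 2) (Fin 2) ℝ
  | 0 => 1
  | k + 1 => schStep V E (m + k) * transferAux V E m k

/-- The discrete transfer matrix `A[V](E,m,n)` (for `n ≥ m`): `A[V](E,m,m) = Id` and
`A[V](E,m,n+1) = [[E − V(n), −1],[1,0]] · A[V](E,m,n)`. -/
def transfer (V : ℤ → ℝ) (E : ℝ) (m n : ℤ) : Matrix (Fin 2) (Fin 2) ℝ :=
  transferAux V E m (n - m).toNat

private def dAux (V : ℤ → ℝ) (E : ℝ) (m : ℤ) : ℕ → Matrix (Fin 2) (Fin 2) ℝ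
  | 0 => 0
  | k + 1 => !![(1:ℝ),0;0,0] * transferAux V E m k + schStep V E (m + k) * dAux V E m k

private lemma transferAux_det (V : ℤ → ℝ) (E : ℝ) (m : ℤ) :
    ∀ k, (transferAux V E m k).det = 1 := by
  intro k
  induction k with
  | zero => simp [transferAux]
  | succ k ih =>
    rw [transferAux, Matrix.det_mul, ih, mul_one]
    simp [schStep, Matrix.det_fin_two_of]

private lemma transferAux_comp (V : ℤ → ℝ) (E : ℝ) (m : ℤ) (j : ℕ) :
    ∀ l, transferAux V E (m + j) l * transferAux V E m j = transferAux V E m (j + l) := by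
  intro l
  induction l with
  | zero => simp [transferAux]
  | succ l ih =>
    have h1 : transferAux V E (m + j) (l + 1)
        = schStep V E (m + j + l) * transferAux V E (m + j) l := rfl
    have h2 : transferAux V E m (j + l + 1)
        = schStep V E (m + (j + l : ℕ)) * transferAux V E m (j + l) := rfl
    have h3 : (m + (j : ℤ)) + (l : ℤ) = m + ((j + l : ℕ) : ℤ) := by push_cast; ring
    rw [h1, mul_assoc, ih, show j + (l+1) = (j + l) + 1 from rfl, h2, h3]

private lemma schStep_entry_deriv (V : ℤ → ℝ) (p : ℤ) (E₀ : ℝ) (i j : Fin 2) :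
    HasDerivAt (fun E => schStep V E p i j) ((!![(1:ℝ),0;0,0]) i j) E₀ := by
  fin_cases i <;> fin_cases j <;>
    simp [schStep] <;>
    first
      | exact hasDerivAt_id E₀
      | exact hasDerivAt_const (F := ℝ) E₀ _

private lemma transferAux_entry_deriv (V : ℤ → ℝ) (m : ℤ) :
    ∀ k (E₀ : ℝ) (i j : Fin 2),
      HasDerivAt (fun E => transferAux V E m k i j) (dAux V E₀ m k i j) E₀ := by
  intro k
  induction k with
  | zero =>
    intro E₀ i j
    simpa [transferAux, dAux] using hasDerivAt_const E₀ ((1 : Matrix (Fin 2) (Fin 2) ℝ) i j)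
  | succ k ih =>
    intro E₀ i j
    have key : HasDerivAt
        (fun E => schStep V E (m + k) i 0 * transferAux V E m k 0 j
          + schStep V E (m + k) i 1 * transferAux V E m k 1 j)
        ((!![(1:ℝ),0;0,0]) i 0 * transferAux V E₀ m k 0 j
            + schStep V E₀ (m + k) i 0 * dAux V E₀ m k 0 j
          + ((!![(1:ℝ),0;0,0]) i 1 * transferAux V E₀ m k 1 j
            + schStep V E₀ (m + k) i 1 * dAux V E₀ m k 1 j)) E₀ :=
      (((schStep_entry_deriv V (m + k) E₀ i 0).mul (ih E₀ 0 j)).add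
        ((schStep_entry_deriv V (m + k) E₀ i 1).mul (ih E₀ 1 j)))
    have h1 : (fun E => transferAux V E m (k+1) i j)
        = fun E => schStep V E (m + k) i 0 * transferAux V E m k 0 j
          + schStep V E (m + k) i 1 * transferAux V E m k 1 j := by
      funext E
      rw [transferAux, Matrix.mul_apply, Fin.sum_univ_two]
    rw [h1]
    convert key using 1
    rw [dAux, Matrix.add_apply, Matrix.mul_apply, Matrix.mul_apply, Fin.sum_univ_two,
      Fin.sum_univ_two]
    ring

private lemma transferAux_entry_cont (V : ℤ → ℝ) (m : ℤ) (k : ℕ) (i j : Fin 2) :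
    Continuous (fun E => transferAux V E m k i j) := by
  have : Differentiable ℝ (fun E => transferAux V E m k i j) :=
    fun E₀ => (transferAux_entry_deriv V m k E₀ i j).differentiableAt
  exact this.continuous

private lemma dAux_eq_sum (V : ℤ → ℝ) (E : ℝ) (m : ℤ) :
    ∀ k, dAux V E m k = ∑ j ∈ Finset.range k,
      transferAux V E (m + j + 1) (k - j - 1) * !![(1:ℝ),0;0,0] * transferAux V E m j := by
  intro k
  induction k with
  | zero => simp [dAux]
  | succ k ih =>
    rw [Finset.sum_range_succ]
    have hlast : transferAux V E (m + k + 1) (k + 1 - k - 1) * !![(1:ℝ),0;0,0]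
        * transferAux V E m k = !![(1:ℝ),0;0,0] * transferAux V E m k := by
      have : k + 1 - k - 1 = 0 := by omega
      rw [this, transferAux, one_mul]
    have hmain : ∀ j ∈ Finset.range k,
        transferAux V E (m + j + 1) (k + 1 - j - 1) * !![(1:ℝ),0;0,0] * transferAux V E m j
        = schStep V E (m + k) *
          (transferAux V E (m + j + 1) (k - j - 1) * !![(1:ℝ),0;0,0] * transferAux V E m j) := by
      intro j hj
      rw [Finset.mem_range] at hj
      have h1 : k + 1 - j - 1 = (k - j - 1) + 1 := by omega
      have h2 : transferAux V E (m + j + 1) ((k - j - 1) + 1)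
          = schStep V E (m + j + 1 + (k - j - 1 : ℕ)) * transferAux V E (m + j + 1) (k - j - 1) :=
        rfl
      have h3 : m + (j:ℤ) + 1 + ((k - j - 1 : ℕ) : ℤ) = m + (k:ℤ) := by
        have : ((k - j - 1 : ℕ) : ℤ) = (k:ℤ) - j - 1 := by omega
        rw [this]; ring
      rw [h1, h2, h3, mul_assoc, mul_assoc, mul_assoc]
    rw [Finset.sum_congr rfl hmain, ← Finset.mul_sum, ← ih, hlast, dAux, add_comm]

-- per-term trace identity
private lemma term_trace (V : ℤ → ℝ) (E : ℝ) (m : ℤ) (k j : ℕ) (hj : j < k) :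
    (transferAux V E (m + j + 1) (k - j - 1) * !![(1:ℝ),0;0,0] * transferAux V E m j).trace
    = (transferAux V E m k 0 0 - transferAux V E m k 1 1)
        * (transferAux V E m j 0 0 * transferAux V E m j 0 1)
      - transferAux V E m k 0 1 * (transferAux V E m j 0 0)^2
      + transferAux V E m k 1 0 * (transferAux V E m j 0 1)^2 := by
  set A := transferAux V E m k with hA
  set P := transferAux V E m j with hP
  set M := transferAux V E m (j + 1) with hM
  set Q := transferAux V E (m + j + 1) (k - j - 1) with hQ
  have hQM : Q * M = A := by
    have h3 : (m + (j:ℤ) + 1) = m + ((j + 1 : ℕ) : ℤ) := by push_cast; ring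
    have := transferAux_comp V E m (j+1) (k - j - 1)
    rw [← h3] at this
    rw [hQ, hM, hA, this, show j + 1 + (k - j - 1) = k by omega]
  have hMP : M = schStep V E (m + j) * P := rfl
  have hM10 : M 1 0 = P 0 0 := by
    rw [hMP, Matrix.mul_apply, Fin.sum_univ_two]; simp [schStep]
  have hM11 : M 1 1 = P 0 1 := by
    rw [hMP, Matrix.mul_apply, Fin.sum_univ_two]; simp [schStep]
  have hdetM : M.det = 1 := transferAux_det V E m (j+1)
  have hMadj : M * M.adjugate = 1 := by
    rw [Matrix.mul_adjugate, hdetM, one_smul]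
  have hQA : Q = A * M.adjugate := by
    calc Q = Q * (M * M.adjugate) := by rw [hMadj, mul_one]
    _ = (Q * M) * M.adjugate := by rw [mul_assoc]
    _ = A * M.adjugate := by rw [hQM]
  rw [hQA, Matrix.adjugate_fin_two]
  simp [Matrix.trace_fin_two, Matrix.mul_apply, Fin.sum_univ_two, hM10, hM11]
  ring

private lemma a10_ne_zero {A : Matrix (Fin 2) (Fin 2) ℝ} (hdet : A.det = 1)
    (htr : |A.trace| < 2) : A 1 0 ≠ 0 := by
  intro h
  rw [Matrix.det_fin_two, h, mul_zero, sub_zero] at hdet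
  rw [Matrix.trace_fin_two] at htr
  have h1 := abs_lt.1 htr
  nlinarith [sq_nonneg (A 0 0 - A 1 1)]

private lemma term_pos (V : ℤ → ℝ) (E : ℝ) (m : ℤ) (k j : ℕ) (hj : j < k)
    (htr : |(transferAux V E m k).trace| < 2) :
    0 ≤ transferAux V E m k 1 0 *
      ((transferAux V E m k 0 0 - transferAux V E m k 1 1)
          * (transferAux V E m j 0 0 * transferAux V E m j 0 1)
        - transferAux V E m k 0 1 * (transferAux V E m j 0 0)^2
        + transferAux V E m k 1 0 * (transferAux V E m j 0 1)^2) := by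
  set A := transferAux V E m k with hA
  set a := transferAux V E m j 0 0
  set b := transferAux V E m j 0 1
  have hdet : A 0 0 * A 1 1 - A 0 1 * A 1 0 = 1 := by
    rw [← Matrix.det_fin_two]; exact transferAux_det V E m k
  have htr2 : (A 0 0 + A 1 1)^2 ≤ 4 := by
    rw [Matrix.trace_fin_two] at htr
    nlinarith [abs_lt.1 htr]
  have key : A 1 0 * ((A 0 0 - A 1 1) * (a * b) - A 0 1 * a^2 + A 1 0 * b^2)
      = (A 1 0 * b + (A 0 0 - A 1 1)/2 * a)^2 + (4 - (A 0 0 + A 1 1)^2)/4 * a^2 := by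
    linear_combination (a^2) * hdet
  rw [key]
  have h4 : (0:ℝ) ≤ (4 - (A 0 0 + A 1 1)^2)/4 := by linarith
  exact add_nonneg (sq_nonneg _) (mul_nonneg h4 (sq_nonneg a))

private lemma dAux_trace_sign (V : ℤ → ℝ) (E : ℝ) (m : ℤ) (k : ℕ) (hk : 1 ≤ k)
    (htr : |(transferAux V E m k).trace| < 2) :
    0 < transferAux V E m k 1 0 * (dAux V E m k).trace := by
  set A := transferAux V E m k with hA
  have hsum : (dAux V E m k).trace = ∑ j ∈ Finset.range k,
      ((A 0 0 - A 1 1) * (transferAux V E m j 0 0 * transferAux V E m j 0 1)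
        - A 0 1 * (transferAux V E m j 0 0)^2
        + A 1 0 * (transferAux V E m j 0 1)^2) := by
    rw [dAux_eq_sum, Matrix.trace_sum]
    exact Finset.sum_congr rfl fun j hj => term_trace V E m k j (Finset.mem_range.1 hj)
  rw [hsum, Finset.mul_sum]
  apply Finset.sum_pos'
  · exact fun j hj => term_pos V E m k j (Finset.mem_range.1 hj) htr
  · refine ⟨0, Finset.mem_range.2 (by omega), ?_⟩
    have h00 : transferAux V E m 0 0 0 = 1 := by
      rw [transferAux]; simp [Matrix.one_apply]
    have h01 : transferAux V E m 0 0 1 = 0 := by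
      rw [transferAux]; simp [Matrix.one_apply]
    rw [h00, h01]
    have hdet : A 0 0 * A 1 1 - A 0 1 * A 1 0 = 1 := by
      rw [← Matrix.det_fin_two]; exact transferAux_det V E m k
    have htr2 : (A 0 0 + A 1 1)^2 < 4 := by
      rw [Matrix.trace_fin_two] at htr
      nlinarith [abs_lt.1 htr]
    nlinarith [sq_nonneg (A 0 0 - A 1 1)]

private lemma conj_helper (c s α β r : ℝ) (hr : r ≠ 0) (hβγ : β * (r * r) = -1 - α ^ 2) :
    !![r, -α/r; 0, 1/r] * !![c + s*α, s*β; s*(r*r), c - s*α]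
      = !![c, -s; s, c] * !![r, -α/r; 0, 1/r] := by
  ext i j
  fin_cases i <;> fin_cases j
  case _ => simp [Matrix.mul_apply, Fin.sum_univ_two]; field_simp; ring
  case _ =>
    simp [Matrix.mul_apply, Fin.sum_univ_two]; field_simp; ring_nf
    linear_combination s * hβγ
  case _ => simp [Matrix.mul_apply, Fin.sum_univ_two]; field_simp
  case _ => simp [Matrix.mul_apply, Fin.sum_univ_two]; field_simp; ring

private lemma rot_conj_exists {A : Matrix (Fin 2) (Fin 2) ℝ} (hdet : A.det = 1) {θ : ℝ}
    (hcos : Real.cos (2 * π * θ) = A.trace / 2)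
    (hγ : 0 < A 1 0 / Real.sin (2 * π * θ)) :
    ∃ B : Matrix (Fin 2) (Fin 2) ℝ, B.det = 1 ∧ B * A * B⁻¹ = rot θ := by
  obtain ⟨s, hsdef⟩ : ∃ s, Real.sin (2 * π * θ) = s := ⟨_, rfl⟩
  obtain ⟨c, hcdef⟩ : ∃ c, A.trace / 2 = c := ⟨_, rfl⟩
  rw [hsdef] at hγ
  have hs : s ≠ 0 := by intro h; rw [h, div_zero] at hγ; exact lt_irrefl 0 hγ
  obtain ⟨γ, hγdef⟩ : ∃ x, A 1 0 / s = x := ⟨_, rfl⟩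
  obtain ⟨α, hαdef⟩ : ∃ x, (A 0 0 - c) / s = x := ⟨_, rfl⟩
  obtain ⟨β, hβdef⟩ : ∃ x, A 0 1 / s = x := ⟨_, rfl⟩
  have hA10 : A 1 0 = s * γ := by rw [← hγdef]; field_simp
  have hA00 : A 0 0 = c + s * α := by rw [← hαdef]; field_simp; ring
  have hA01 : A 0 1 = s * β := by rw [← hβdef]; field_simp
  have hA11 : A 1 1 = c - s * α := by
    have ht : A 0 0 + A 1 1 = 2 * c := by rw [← hcdef, Matrix.trace_fin_two] at *; linarith
    rw [hA00] at ht; linarith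
  have hs2 : s ^ 2 = 1 - c ^ 2 := by
    have h := Real.sin_sq_add_cos_sq (2 * π * θ)
    rw [hsdef, hcos, hcdef] at h; nlinarith
  have hβγ' : β * γ = -1 - α ^ 2 := by
    rw [Matrix.det_fin_two, hA00, hA01, hA10, hA11] at hdet
    have h2 : s * (s * (β * γ)) = s * (s * (-1 - α ^ 2)) := by nlinarith [hdet, hs2]
    exact mul_left_cancel₀ hs (mul_left_cancel₀ hs h2)
  have hγpos : 0 < γ := hγdef ▸ hγ
  set r := Real.sqrt γ with hrdef
  have hr : r ≠ 0 := ne_of_gt (Real.sqrt_pos.2 hγpos)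
  have hγsq : r * r = γ := Real.mul_self_sqrt hγpos.le
  have hAeq : A = !![c + s*α, s*β; s*(r*r), c - s*α] := by
    ext i j
    fin_cases i <;> fin_cases j <;>
      simp [hA00, hA01, hA10, hA11, hγsq]
  have hrot : rot θ = !![c, -s; s, c] := by
    rw [rot, hsdef, hcos, hcdef]
  refine ⟨!![r, -α/r; 0, 1/r], by rw [Matrix.det_fin_two_of]; field_simp; simp, ?_⟩
  have hBA : !![r, -α/r; 0, 1/r] * A = rot θ * !![r, -α/r; 0, 1/r] := by
    rw [hAeq, hrot]
    exact conj_helper c s α β r hr (by rw [hγsq]; exact hβγ')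
  have hdetB : (!![r, -α/r; 0, 1/r] : Matrix (Fin 2) (Fin 2) ℝ).det = 1 := by
    rw [Matrix.det_fin_two_of]; field_simp; simp
  have hBinv : !![r, -α/r; 0, 1/r] * (!![r, -α/r; 0, 1/r] : Matrix (Fin 2) (Fin 2) ℝ)⁻¹ = 1 :=
    Matrix.mul_nonsing_inv _ (by rw [hdetB]; exact isUnit_one)
  rw [hBA, mul_assoc, hBinv, mul_one]

private lemma rot_number_unique {A : Matrix (Fin 2) (Fin 2) ℝ} {θ : ℝ}
    (h : IsRotationNumber A θ) :
    (0 < A 1 0 ∧ θ = Real.arccos (A.trace / 2) / (2 * π)) ∨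
      (A 1 0 < 0 ∧ θ = 1 - Real.arccos (A.trace / 2) / (2 * π)) := by
  obtain ⟨hmem, B, hdetB, hconj⟩ := h
  have hU : IsUnit B.det := by rw [hdetB]; exact isUnit_one
  have hBB : B⁻¹ * B = 1 := Matrix.nonsing_inv_mul B hU
  have htrace : Real.cos (2 * π * θ) = A.trace / 2 := by
    have h1 : (rot θ).trace = A.trace := by
      rw [← hconj]
      calc (B * A * B⁻¹).trace = (B⁻¹ * (B * A)).trace := Matrix.trace_mul_comm _ _
      _ = ((B⁻¹ * B) * A).trace := by rw [mul_assoc]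
      _ = A.trace := by rw [hBB, one_mul]
    rw [rot, Matrix.trace_fin_two] at h1
    simp at h1
    linarith
  have h2 : B⁻¹ * (B * A * B⁻¹) * B = A := by
    simp only [← mul_assoc]
    rw [hBB, one_mul, mul_assoc, hBB, mul_one]
  have hAeq : A = B⁻¹ * rot θ * B := by rw [← h2, hconj, mul_assoc]
  have hBinv_eq : B⁻¹ = B.adjugate := by rw [Matrix.inv_def, hdetB]; simp
  have hA10 : A 1 0 = Real.sin (2 * π * θ) * ((B 0 0)^2 + (B 1 0)^2) := by
    rw [hAeq, hBinv_eq, Matrix.adjugate_fin_two]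
    simp [rot, Matrix.mul_apply, Fin.sum_univ_two]
    ring
  have hpos : 0 < (B 0 0)^2 + (B 1 0)^2 := by
    by_contra hc
    push_neg at hc
    have hb1 : B 0 0 = 0 := by nlinarith [sq_nonneg (B 0 0), sq_nonneg (B 1 0)]
    have hb2 : B 1 0 = 0 := by nlinarith [sq_nonneg (B 0 0), sq_nonneg (B 1 0)]
    rw [Matrix.det_fin_two, hb1, hb2] at hdetB
    norm_num at hdetB
  have hπ : (0:ℝ) < π := Real.pi_pos
  rcases hmem with hmem | hmem
  · obtain ⟨hθ0, hθ1⟩ := hmem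
    have hsin : 0 < Real.sin (2 * π * θ) := by
      apply Real.sin_pos_of_pos_of_lt_pi <;> nlinarith
    left
    constructor
    · rw [hA10]; positivity
    · have harc : Real.arccos (A.trace / 2) = 2 * π * θ := by
        rw [← htrace, Real.arccos_cos (by positivity) (by nlinarith)]
      rw [harc]
      field_simp
  · obtain ⟨hθ0, hθ1⟩ := hmem
    have hsin_eq : Real.sin (2 * π * θ) = -Real.sin (2 * π - 2 * π * θ) := by
      rw [Real.sin_sub]
      simp [Real.sin_two_pi, Real.cos_two_pi]
    have hsin2 : 0 < Real.sin (2 * π - 2 * π * θ) := by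
      apply Real.sin_pos_of_pos_of_lt_pi <;> nlinarith
    have hsin : Real.sin (2 * π * θ) < 0 := by rw [hsin_eq]; linarith
    right
    constructor
    · rw [hA10]; nlinarith
    · have hcos2 : Real.cos (2 * π - 2 * π * θ) = A.trace / 2 := by
        rw [Real.cos_sub]
        simp [Real.sin_two_pi, Real.cos_two_pi, htrace]
      have harc : Real.arccos (A.trace / 2) = 2 * π - 2 * π * θ := by
        rw [← hcos2, Real.arccos_cos (by nlinarith) (by nlinarith)]
      rw [harc]
      field_simp; ring

private lemma theta_eq_pos {A : Matrix (Fin 2) (Fin 2) ℝ} (hdet : A.det = 1)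
    (htr : |A.trace| < 2) (hg : 0 < A 1 0) :
    Theta A = Real.arccos (A.trace / 2) / (2 * π) := by
  have hπ : (0:ℝ) < π := Real.pi_pos
  have ht1 : -1 < A.trace / 2 := by have := abs_lt.1 htr; linarith
  have ht2 : A.trace / 2 < 1 := by have := abs_lt.1 htr; linarith
  have harc0 : 0 < Real.arccos (A.trace / 2) := Real.arccos_pos.2 ht2
  have harcπ : Real.arccos (A.trace / 2) < π := by
    refine lt_of_le_of_ne (Real.arccos_le_pi _) fun hEq => ?_
    have hc := Real.cos_arccos ht1.le ht2.le
    rw [hEq, Real.cos_pi] at hc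
    linarith
  have h2π : (2 * π) ≠ 0 := by positivity
  have hval : 2 * π * (Real.arccos (A.trace / 2) / (2 * π)) = Real.arccos (A.trace / 2) := by
    field_simp
  have hcos : Real.cos (2 * π * (Real.arccos (A.trace / 2) / (2 * π))) = A.trace / 2 := by
    rw [hval, Real.cos_arccos ht1.le ht2.le]
  have hsin : 0 < Real.sin (2 * π * (Real.arccos (A.trace / 2) / (2 * π))) := by
    rw [hval]
    exact Real.sin_pos_of_pos_of_lt_pi harc0 harcπ
  have hrot : IsRotationNumber A (Real.arccos (A.trace / 2) / (2 * π)) := by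
    refine ⟨Or.inl ⟨by positivity, ?_⟩, rot_conj_exists hdet hcos (div_pos hg hsin)⟩
    rw [div_lt_iff₀ (by positivity)]
    nlinarith
  have hex : ∃ θ, IsRotationNumber A θ := ⟨_, hrot⟩
  have hTh : Theta A = hex.choose := by rw [Theta, dif_pos hex]
  rcases rot_number_unique hex.choose_spec with ⟨_, hEq⟩ | ⟨hneg, _⟩
  · rw [hTh, hEq]
  · linarith

private lemma theta_eq_neg {A : Matrix (Fin 2) (Fin 2) ℝ} (hdet : A.det = 1)
    (htr : |A.trace| < 2) (hg : A 1 0 < 0) :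
    Theta A = 1 - Real.arccos (A.trace / 2) / (2 * π) := by
  have hπ : (0:ℝ) < π := Real.pi_pos
  have ht1 : -1 < A.trace / 2 := by have := abs_lt.1 htr; linarith
  have ht2 : A.trace / 2 < 1 := by have := abs_lt.1 htr; linarith
  have harc0 : 0 < Real.arccos (A.trace / 2) := Real.arccos_pos.2 ht2
  have harcπ : Real.arccos (A.trace / 2) < π := by
    refine lt_of_le_of_ne (Real.arccos_le_pi _) fun hEq => ?_
    have hc := Real.cos_arccos ht1.le ht2.le
    rw [hEq, Real.cos_pi] at hc
    linarith
  have hval : 2 * π * (1 - Real.arccos (A.trace / 2) / (2 * π))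
      = 2 * π - Real.arccos (A.trace / 2) := by field_simp
  have hcos : Real.cos (2 * π * (1 - Real.arccos (A.trace / 2) / (2 * π))) = A.trace / 2 := by
    rw [hval, Real.cos_sub]
    simp [Real.sin_two_pi, Real.cos_two_pi, Real.cos_arccos ht1.le ht2.le]
  have hsin : Real.sin (2 * π * (1 - Real.arccos (A.trace / 2) / (2 * π))) < 0 := by
    rw [hval, Real.sin_sub]
    simp only [Real.sin_two_pi, Real.cos_two_pi, zero_mul, one_mul, zero_sub, neg_neg,
      zero_mul, neg_lt, neg_zero]
    have := Real.sin_pos_of_pos_of_lt_pi harc0 harcπ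
    simpa using this
  have hmem : 1 - Real.arccos (A.trace / 2) / (2 * π) ∈ Set.Ioo (1/2:ℝ) 1 := by
    constructor
    · have h1 : Real.arccos (A.trace / 2) / (2 * π) < 1/2 := by
        rw [div_lt_iff₀ (by positivity)]
        nlinarith
      linarith
    · have : 0 < Real.arccos (A.trace / 2) / (2 * π) := by positivity
      linarith
  have hrot : IsRotationNumber A (1 - Real.arccos (A.trace / 2) / (2 * π)) := by
    refine ⟨Or.inr hmem, rot_conj_exists hdet hcos (div_pos_of_neg_of_neg hg hsin)⟩
  have hex : ∃ θ, IsRotationNumber A θ := ⟨_, hrot⟩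
  have hTh : Theta A = hex.choose := by rw [Theta, dif_pos hex]
  rcases rot_number_unique hex.choose_spec with ⟨hpos, _⟩ | ⟨_, hEq⟩
  · linarith
  · rw [hTh, hEq]

/-- Monotonicity of the rotation number of discrete transfer matrices (Lemma 5.1):
if `m < n` and `|tr A[V](E₀,m,n)| < 2` then `E ↦ Θ(A[V](E,m,n))` has a negative
derivative at `E₀`. -/
theorem stmt12 (V : ℤ → ℝ) (m n : ℤ) (hmn : m < n) (E₀ : ℝ)
    (htr : |(transfer V E₀ m n).trace| < 2) :
    ∃ L : ℝ, L < 0 ∧ HasDerivAt (fun E => Theta (transfer V E m n)) L E₀ := by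
  have hπ : (0:ℝ) < π := Real.pi_pos
  set k := (n - m).toNat with hk
  have hk1 : 1 ≤ k := by omega
  have htrans : ∀ E, transfer V E m n = transferAux V E m k := fun E => rfl
  have hdet : ∀ E, (transferAux V E m k).det = 1 := fun E => transferAux_det V E m k
  have htr' : |(transferAux V E₀ m k).trace| < 2 := htr
  have hg_ne : transferAux V E₀ m k 1 0 ≠ 0 := a10_ne_zero (hdet E₀) htr'
  have hD : HasDerivAt (fun E => (transferAux V E m k).trace) ((dAux V E₀ m k).trace) E₀ := by
    have h00 := transferAux_entry_deriv V m k E₀ 0 0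
    have h11 := transferAux_entry_deriv V m k E₀ 1 1
    have h2 := h00.add h11
    have he : (fun E => (transferAux V E m k).trace)
        = fun E => transferAux V E m k 0 0 + transferAux V E m k 1 1 := by
      funext E; rw [Matrix.trace_fin_two]
    rw [he, Matrix.trace_fin_two]
    exact h2
  have hsign : 0 < transferAux V E₀ m k 1 0 * (dAux V E₀ m k).trace :=
    dAux_trace_sign V E₀ m k hk1 htr'
  have hcontTr : Continuous (fun E => (transferAux V E m k).trace) := by
    have he : (fun E => (transferAux V E m k).trace)
        = fun E => transferAux V E m k 0 0 + transferAux V E m k 1 1 := by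
      funext E; rw [Matrix.trace_fin_two]
    rw [he]
    exact (transferAux_entry_cont V m k 0 0).add (transferAux_entry_cont V m k 1 1)
  have hcontg : Continuous (fun E => transferAux V E m k 1 0) := transferAux_entry_cont V m k 1 0
  have hev_tr : ∀ᶠ E in nhds E₀, |(transferAux V E m k).trace| < 2 :=
    (hcontTr.abs.continuousAt).eventually_lt continuousAt_const htr'
  have habs := abs_lt.1 htr'
  have hne1 : (transferAux V E₀ m k).trace / 2 ≠ -1 := by
    intro h; rw [div_eq_iff (by norm_num : (2:ℝ) ≠ 0)] at h; linarith
  have hne2 : (transferAux V E₀ m k).trace / 2 ≠ 1 := by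
    intro h; rw [div_eq_iff (by norm_num : (2:ℝ) ≠ 0)] at h; linarith
  have hsq : 0 < Real.sqrt (1 - ((transferAux V E₀ m k).trace / 2) ^ 2) := by
    apply Real.sqrt_pos.2; nlinarith
  have hacd : HasDerivAt (fun E => Real.arccos ((transferAux V E m k).trace / 2))
      (-(1 / Real.sqrt (1 - ((transferAux V E₀ m k).trace / 2) ^ 2))
        * ((dAux V E₀ m k).trace / 2)) E₀ := by
    have := (Real.hasDerivAt_arccos hne1 hne2).comp E₀ (hD.div_const 2)
    simpa [Function.comp_def] using this
  rcases lt_or_gt_of_ne hg_ne with hneg | hpos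
  · -- A 1 0 < 0
    have hev_g : ∀ᶠ E in nhds E₀, transferAux V E m k 1 0 < 0 :=
      (hcontg.continuousAt).eventually_lt continuousAt_const hneg
    have hEq : (fun E => Theta (transfer V E m n)) =ᶠ[nhds E₀]
        (fun E => 1 - Real.arccos ((transferAux V E m k).trace / 2) / (2 * π)) := by
      filter_upwards [hev_tr, hev_g] with E h1 h2
      rw [htrans E]
      exact theta_eq_neg (hdet E) h1 h2
    have hDneg : (dAux V E₀ m k).trace < 0 := by nlinarith
    refine ⟨-(-(1 / Real.sqrt (1 - ((transferAux V E₀ m k).trace / 2) ^ 2))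
        * ((dAux V E₀ m k).trace / 2) / (2 * π)), ?_, ?_⟩
    · have h1 : 0 < 1 / Real.sqrt (1 - ((transferAux V E₀ m k).trace / 2) ^ 2) := by positivity
      have h2 : -(1 / Real.sqrt (1 - ((transferAux V E₀ m k).trace / 2) ^ 2))
          * ((dAux V E₀ m k).trace / 2) > 0 := by nlinarith
      have h3 : (0:ℝ) < 2 * π := by positivity
      have := div_pos h2 h3
      linarith
    · exact ((hacd.div_const (2 * π)).const_sub 1).congr_of_eventuallyEq hEq
  · -- A 1 0 > 0
    have hev_g : ∀ᶠ E in nhds E₀, 0 < transferAux V E m k 1 0 :=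
      (continuousAt_const (y := (0:ℝ))).eventually_lt (hcontg.continuousAt) hpos
    have hEq : (fun E => Theta (transfer V E m n)) =ᶠ[nhds E₀]
        (fun E => Real.arccos ((transferAux V E m k).trace / 2) / (2 * π)) := by
      filter_upwards [hev_tr, hev_g] with E h1 h2
      rw [htrans E]
      exact theta_eq_pos (hdet E) h1 h2
    have hDpos : 0 < (dAux V E₀ m k).trace := by nlinarith
    refine ⟨-(1 / Real.sqrt (1 - ((transferAux V E₀ m k).trace / 2) ^ 2))
        * ((dAux V E₀ m k).trace / 2) / (2 * π), ?_, ?_⟩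
    · have h1 : 0 < 1 / Real.sqrt (1 - ((transferAux V E₀ m k).trace / 2) ^ 2) := by positivity
      have h2 : -(1 / Real.sqrt (1 - ((transferAux V E₀ m k).trace / 2) ^ 2))
          * ((dAux V E₀ m k).trace / 2) < 0 := by nlinarith
      have h3 : (0:ℝ) < 2 * π := by positivity
      exact div_neg_of_neg_of_pos h2 h3
    · exact (hacd.div_const (2 * π)).congr_of_eventuallyEq hEq
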